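/- Let π be a two-qubit density matrix satisfying U_θ π U_θ† = π for all θ ∈ ℝ. Suppose σ* is a separable two-qubit density matrix such that D_max(π‖σ*) ≤ D_max(π‖σ) for every separable two-qubit density matrix σ. Then the averaged state σ̄ := (1/2π)·∫₀^{2π} U_θ σ* U_θ† dθ is a separable two-qubit density matrix and D_max(π‖σ̄) = D_max(π‖σ*). Moreover, if σ* minimizes D_max(π‖·) over separable two-qubit density matrices σ with Tr_B σ = I₂/2, then additionally Tr_B σ̄ = I₂/2 and the same equality D_max(π‖σ̄) = D_max(π‖σ*) holds. -/

import Mathlib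

open scoped Kronecker ComplexOrder
open Matrix

noncomputable section

/-- A density matrix: positive semidefinite with unit trace. -/
def IsDensity {n : Type*} [Fintype n] (M : Matrix n n ℂ) : Prop :=
  M.PosSemidef ∧ M.trace = 1

/-- A bipartite density matrix is separable if it is a finite convex combination of
Kronecker products of density matrices on the two factors. -/
def SepState {m k : Type*} [Fintype m] [Fintype k]
    (M : Matrix (m × k) (m × k) ℂ) : Prop :=
  ∃ (L : ℕ) (p : Fin L → ℝ) (P : Fin L → Matrix m m ℂ) (Q : Fin L → Matrix k k ℂ),
    (∀ i, 0 ≤ p i) ∧ (∑ i, p i) = 1 ∧ (∀ i, IsDensity (P i)) ∧ (∀ i, IsDensity (Q i)) ∧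
    M = ∑ i, ((p i : ℂ) • (P i ⊗ₖ Q i))

/-- Max-relative entropy `D_max(ρ‖σ) = inf {x : 2^x • σ - ρ ⪰ 0}`, `+∞` if no such `x`. -/
def Dmax {n : Type*} [Fintype n] (ρ σ : Matrix n n ℂ) : EReal :=
  sInf {x : EReal | ∃ r : ℝ, x = (r : EReal) ∧ (((2:ℝ) ^ r) • σ - ρ).PosSemidef}

/-- Partial trace over the second tensor factor. -/
def ptraceB {m k : Type*} [Fintype k] (M : Matrix (m × k) (m × k) ℂ) : Matrix m m ℂ :=
  Matrix.of fun i j => ∑ b, M (i, b) (j, b)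

/-- The diagonal two-qubit phase unitary `U_θ = diag(1, e^{iθ}, e^{-iθ}, 1)`. -/
def Utheta (θ : ℝ) : Matrix (Fin 2 × Fin 2) (Fin 2 × Fin 2) ℂ :=
  Matrix.diagonal fun p => Complex.exp (Complex.I * θ * (((p.2 : ℕ) : ℂ) - ((p.1 : ℕ) : ℂ)))

/-- Phase-averaged state `(1/2π) ∫₀^{2π} U_θ σ U_θ† dθ`, defined entrywise. -/
def avgState (σ : Matrix (Fin 2 × Fin 2) (Fin 2 × Fin 2) ℂ) :
    Matrix (Fin 2 × Fin 2) (Fin 2 × Fin 2) ℂ :=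
  Matrix.of fun p q =>
    ((1 / (2 * Real.pi) : ℝ) : ℂ) *
      ∫ θ in (0:ℝ)..(2 * Real.pi), (Utheta θ * σ * (Utheta θ)ᴴ) p q

/-! ### Auxiliary definitions and lemmas -/

def kdiff (p q : Fin 2 × Fin 2) : ℤ :=
  ((p.2 : ℕ) : ℤ) - ((p.1 : ℕ) : ℤ) - ((q.2 : ℕ) : ℤ) + ((q.1 : ℕ) : ℤ)

def deph (M : Matrix (Fin 2 × Fin 2) (Fin 2 × Fin 2) ℂ) :
    Matrix (Fin 2 × Fin 2) (Fin 2 × Fin 2) ℂ :=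
  Matrix.of fun p q => if kdiff p q = 0 then M p q else 0

def Vn (n : Fin 3) : Matrix (Fin 2 × Fin 2) (Fin 2 × Fin 2) ℂ :=
  Utheta (2 * Real.pi * n / 3)

lemma conj_entry (θ : ℝ) (M : Matrix (Fin 2 × Fin 2) (Fin 2 × Fin 2) ℂ) (p q : Fin 2 × Fin 2) :
    (Utheta θ * M * (Utheta θ)ᴴ) p q
      = Complex.exp (Complex.I * θ * ((kdiff p q : ℤ) : ℂ)) * M p q := by
  rw [Utheta, Matrix.diagonal_conjTranspose, Matrix.mul_diagonal, Matrix.diagonal_mul]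
  have hstar :
      (star fun p : Fin 2 × Fin 2 =>
        Complex.exp (Complex.I * θ * (((p.2 : ℕ) : ℂ) - ((p.1 : ℕ) : ℂ)))) q
        = Complex.exp (-(Complex.I * θ * (((q.2 : ℕ) : ℂ) - ((q.1 : ℕ) : ℂ)))) := by
    simp only [Pi.star_apply, Complex.star_def, ← Complex.exp_conj]
    congr 1
    simp only [_root_.map_mul, _root_.map_sub, Complex.conj_I, Complex.conj_ofReal, Complex.conj_natCast]
    ring
  rw [hstar]
  rw [mul_comm (Complex.exp _ * M p q), ← mul_assoc, ← Complex.exp_add]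
  congr 1
  unfold kdiff
  push_cast
  ring

lemma avg_eq_deph (M : Matrix (Fin 2 × Fin 2) (Fin 2 × Fin 2) ℂ) :
    avgState M = deph M := by
  ext p q
  show ((1 / (2 * Real.pi) : ℝ) : ℂ) *
      (∫ θ in (0:ℝ)..(2 * Real.pi), (Utheta θ * M * (Utheta θ)ᴴ) p q)
      = deph M p q
  simp only [conj_entry]
  rw [intervalIntegral.integral_mul_const]
  by_cases h : kdiff p q = 0
  · simp only [h, Int.cast_zero, mul_zero, Complex.exp_zero]
    rw [intervalIntegral.integral_const]
    simp only [sub_zero, smul_eq_mul, mul_one]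
    rw [deph]
    simp only [Matrix.of_apply, if_pos h]
    rw [Complex.real_smul]
    rw [← mul_assoc, mul_one, ← Complex.ofReal_mul]
    rw [one_div, inv_mul_cancel₀ (by positivity : (2 * Real.pi) ≠ 0)]
    simp
  · have harg : ∀ θ : ℝ, Complex.I * θ * ((kdiff p q : ℤ) : ℂ)
        = (Complex.I * ((kdiff p q : ℤ) : ℂ)) * θ := by intro θ; ring
    simp only [harg]
    rw [integral_exp_mul_complex (by
      simp [Complex.I_ne_zero, Complex.ext_iff, h] : Complex.I * ((kdiff p q : ℤ) : ℂ) ≠ 0)]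
    have h2 : Complex.exp (Complex.I * ((kdiff p q : ℤ) : ℂ) * ((2 * Real.pi : ℝ) : ℂ)) = 1 := by
      have : Complex.I * ((kdiff p q : ℤ) : ℂ) * ((2 * Real.pi : ℝ) : ℂ)
          = ((kdiff p q : ℤ) : ℂ) * (2 * (Real.pi : ℂ) * Complex.I) := by push_cast; ring
      rw [this, Complex.exp_int_mul, Complex.exp_two_pi_mul_I, _root_.one_zpow]
    rw [h2]
    simp [deph, if_neg h]

lemma kdiff_bound (p q : Fin 2 × Fin 2) : kdiff p q ≤ 2 ∧ -2 ≤ kdiff p q := by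
  have h1 := p.1.is_lt; have h2 := p.2.is_lt; have h3 := q.1.is_lt; have h4 := q.2.is_lt
  unfold kdiff; omega

lemma deph_eq_discrete (M : Matrix (Fin 2 × Fin 2) (Fin 2 × Fin 2) ℂ) :
    deph M = (3 : ℂ)⁻¹ • ∑ n : Fin 3, Vn n * M * (Vn n)ᴴ := by
  ext p q
  simp only [Matrix.smul_apply, Matrix.sum_apply, Vn, conj_entry, smul_eq_mul]
  set k : ℤ := kdiff p q with hk
  have hterm : ∀ n : Fin 3,
      Complex.exp (Complex.I * ((2 * Real.pi * n / 3 : ℝ) : ℂ) * (k : ℂ))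
        = (Complex.exp ((k : ℂ) * (2 * (Real.pi : ℂ) * Complex.I) / 3)) ^ (n : ℕ) := by
    intro n
    rw [← Complex.exp_nat_mul]
    congr 1
    push_cast
    ring
  simp only [hterm]
  set z : ℂ := Complex.exp ((k : ℂ) * (2 * (Real.pi : ℂ) * Complex.I) / 3) with hz
  rw [Fin.sum_univ_three]
  simp only [Fin.val_zero, Fin.val_one, Fin.val_two, pow_zero, pow_one, pow_two]
  by_cases h : k = 0
  · have : z = 1 := by rw [hz, h]; simp
    rw [this]
    simp only [deph, Matrix.of_apply, ← hk, if_pos h]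
    ring
  · have hz3 : z ^ 3 = 1 := by
      rw [hz, ← Complex.exp_nat_mul]
      have : (3 : ℕ) * ((k : ℂ) * (2 * (Real.pi : ℂ) * Complex.I) / 3)
          = (k : ℂ) * (2 * (Real.pi : ℂ) * Complex.I) := by push_cast; ring
      rw [this, Complex.exp_int_mul, Complex.exp_two_pi_mul_I, _root_.one_zpow]
    have hzne : z ≠ 1 := by
      intro hz1
      rw [hz, Complex.exp_eq_one_iff] at hz1
      obtain ⟨m, hm⟩ := hz1
      have hpi : (Real.pi : ℂ) ≠ 0 := by
        simpa using Complex.ofReal_ne_zero.mpr Real.pi_ne_zero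
      have : (k : ℂ) = 3 * m := by
        have h2 : ((k : ℂ)) * (2 * (Real.pi : ℂ) * Complex.I)
            = (3 * m) * (2 * (Real.pi : ℂ) * Complex.I) := by
          linear_combination (3 : ℂ) * hm
        have hI : (2 * (Real.pi : ℂ) * Complex.I) ≠ 0 := by
          simp [Complex.I_ne_zero, hpi]
        exact mul_right_cancel₀ hI h2
      have hk3 : k = 3 * m := by exact_mod_cast this
      obtain ⟨hb1, hb2⟩ := kdiff_bound p q
      omega
    have hsum : 1 + z + z * z = 0 := by
      have hfac : (z - 1) * (1 + z + z * z) = z ^ 3 - 1 := by ring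
      rw [hz3, sub_self] at hfac
      rcases mul_eq_zero.mp hfac with h1 | h1
      · exact absurd (sub_eq_zero.mp h1) hzne
      · exact h1
    simp only [deph, Matrix.of_apply, ← hk, if_neg h]
    have : 1 * M p q + z * M p q + z * z * M p q = (1 + z + z * z) * M p q := by ring
    rw [this, hsum, zero_mul, mul_zero]

lemma psd_smul_real {n : Type*} [Fintype n] {M : Matrix n n ℂ} (hM : M.PosSemidef)
    {c : ℝ} (hc : 0 ≤ c) : ((c : ℂ) • M).PosSemidef := by
  constructor
  · show ((c : ℂ) • M)ᴴ = (c : ℂ) • M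
    rw [conjTranspose_smul, hM.1.eq, Complex.star_def, Complex.conj_ofReal]
  · intro x
    simp only [Matrix.smul_apply, smul_eq_mul]
    have e : (x.sum fun i xi => x.sum fun j xj => star xi * ((c : ℂ) * M i j) * xj)
        = (c : ℂ) * (x.sum fun i xi => x.sum fun j xj => star xi * M i j * xj) := by
      simp only [Finsupp.sum, Finset.mul_sum]
      exact Finset.sum_congr rfl fun i _ => Finset.sum_congr rfl fun j _ => by ring
    rw [e]
    exact mul_nonneg (Complex.zero_le_real.mpr hc) (hM.2 x)

lemma psd_sum {ι : Type*} {n : Type*} [Fintype n] (s : Finset ι) (f : ι → Matrix n n ℂ)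
    (h : ∀ i ∈ s, (f i).PosSemidef) : (∑ i ∈ s, f i).PosSemidef := by
  classical
  induction s using Finset.induction_on with
  | empty => simpa using Matrix.PosSemidef.zero
  | insert a s hx ih =>
      rw [Finset.sum_insert hx]
      exact ((h _ (Finset.mem_insert_self _ _)).add
        (ih fun i hi => h i (Finset.mem_insert_of_mem hi)))

lemma diag_unitary {n : Type*} [Fintype n] [DecidableEq n] {d : n → ℂ}
    (h : ∀ i, star (d i) * d i = 1) : (Matrix.diagonal d)ᴴ * Matrix.diagonal d = 1 := by
  rw [Matrix.diagonal_conjTranspose, Matrix.diagonal_mul_diagonal]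
  have : (fun i => (star d) i * d i) = fun _ => (1 : ℂ) := funext fun i => h i
  rw [this, Matrix.diagonal_one]

lemma star_exp_unit (z : ℂ) (hz : star z = -z) : star (Complex.exp z) * Complex.exp z = 1 := by
  rw [Complex.star_def, ← Complex.exp_conj, ← Complex.exp_add]
  rw [show (starRingEnd ℂ) z = star z from rfl, hz, neg_add_cancel, Complex.exp_zero]

lemma trace_conj {n : Type*} [Fintype n] [DecidableEq n] {A M : Matrix n n ℂ}
    (hA : Aᴴ * A = 1) : (A * M * Aᴴ).trace = M.trace := by
  rw [Matrix.trace_mul_cycle, hA, Matrix.one_mul]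

lemma Utheta_unitary (θ : ℝ) : (Utheta θ)ᴴ * Utheta θ = 1 := by
  apply diag_unitary
  intro i
  apply star_exp_unit
  simp only [Complex.star_def, _root_.map_mul, _root_.map_sub, Complex.conj_I,
    Complex.conj_ofReal, Complex.conj_natCast]
  ring

def Adiag (θ : ℝ) : Matrix (Fin 2) (Fin 2) ℂ :=
  Matrix.diagonal fun i => Complex.exp (-(Complex.I * θ * ((i : ℕ) : ℂ)))
def Bdiag (θ : ℝ) : Matrix (Fin 2) (Fin 2) ℂ :=
  Matrix.diagonal fun j => Complex.exp (Complex.I * θ * ((j : ℕ) : ℂ))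

lemma Utheta_local (θ : ℝ) : Utheta θ = Adiag θ ⊗ₖ Bdiag θ := by
  rw [Adiag, Bdiag, Matrix.diagonal_kronecker_diagonal, Utheta]
  have h : (fun p : Fin 2 × Fin 2 =>
      Complex.exp (Complex.I * θ * (((p.2 : ℕ) : ℂ) - ((p.1 : ℕ) : ℂ))))
      = fun mn : Fin 2 × Fin 2 =>
        Complex.exp (-(Complex.I * θ * ((mn.1 : ℕ) : ℂ)))
          * Complex.exp (Complex.I * θ * ((mn.2 : ℕ) : ℂ)) := by
    funext mn
    rw [← Complex.exp_add]
    congr 1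
    ring
  exact congrArg Matrix.diagonal h

lemma Adiag_unitary (θ : ℝ) : (Adiag θ)ᴴ * Adiag θ = 1 := by
  apply diag_unitary
  intro i
  apply star_exp_unit
  simp only [Complex.star_def, _root_.map_neg, _root_.map_mul, Complex.conj_I,
    Complex.conj_ofReal, Complex.conj_natCast]
  ring

lemma Bdiag_unitary (θ : ℝ) : (Bdiag θ)ᴴ * Bdiag θ = 1 := by
  apply diag_unitary
  intro i
  apply star_exp_unit
  simp only [Complex.star_def, _root_.map_mul, Complex.conj_I,
    Complex.conj_ofReal, Complex.conj_natCast]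
  ring

lemma kron_conjT {m k : Type*} [Fintype m] [Fintype k]
    (A : Matrix m m ℂ) (B : Matrix k k ℂ) : (A ⊗ₖ B)ᴴ = Aᴴ ⊗ₖ Bᴴ := by
  ext p q
  simp only [Matrix.conjTranspose_apply, Matrix.kroneckerMap_apply, star_mul']
  try ring

lemma conj_density {n : Type*} [Fintype n] [DecidableEq n] {A M : Matrix n n ℂ}
    (hA : Aᴴ * A = 1) (hM : IsDensity M) : IsDensity (A * M * Aᴴ) :=
  ⟨hM.1.mul_mul_conjTranspose_same A, by rw [trace_conj hA, hM.2]⟩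

lemma deph_psd {M : Matrix (Fin 2 × Fin 2) (Fin 2 × Fin 2) ℂ} (hM : M.PosSemidef) :
    (deph M).PosSemidef := by
  rw [deph_eq_discrete]
  have h3 : ((3 : ℂ)⁻¹) = (((3 : ℝ)⁻¹ : ℝ) : ℂ) := by push_cast; ring
  rw [h3]
  exact psd_smul_real (psd_sum _ _ fun n _ => hM.mul_mul_conjTranspose_same (Vn n))
    (by norm_num)

lemma deph_trace (M : Matrix (Fin 2 × Fin 2) (Fin 2 × Fin 2) ℂ) :
    (deph M).trace = M.trace := by
  unfold Matrix.trace Matrix.diag deph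
  apply Finset.sum_congr rfl
  intro p _
  simp only [Matrix.of_apply]
  rw [if_pos (by unfold kdiff; ring)]

lemma deph_invariant (π₀ : Matrix (Fin 2 × Fin 2) (Fin 2 × Fin 2) ℂ)
    (hinv : ∀ θ : ℝ, Utheta θ * π₀ * (Utheta θ)ᴴ = π₀) : deph π₀ = π₀ := by
  rw [deph_eq_discrete]
  have : ∀ n : Fin 3, Vn n * π₀ * (Vn n)ᴴ = π₀ := fun n => hinv _
  simp only [this, Finset.sum_const, Finset.card_univ, Fintype.card_fin]
  rw [← Nat.cast_smul_eq_nsmul ℂ, smul_smul]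
  norm_num

lemma deph_linear (r : ℝ) (M N : Matrix (Fin 2 × Fin 2) (Fin 2 × Fin 2) ℂ) :
    ((2:ℝ) ^ r) • deph M - deph N = deph (((2:ℝ) ^ r) • M - N) := by
  ext p q
  simp only [deph, Matrix.sub_apply, Matrix.smul_apply, Matrix.of_apply]
  split_ifs <;> simp

lemma dmax_deph_le (π₀ σ : Matrix (Fin 2 × Fin 2) (Fin 2 × Fin 2) ℂ)
    (hπ : deph π₀ = π₀) : Dmax π₀ (deph σ) ≤ Dmax π₀ σ := by
  apply sInf_le_sInf
  rintro x ⟨r, rfl, hpsd⟩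
  refine ⟨r, rfl, ?_⟩
  have : ((2:ℝ) ^ r) • deph σ - π₀ = deph (((2:ℝ) ^ r) • σ - π₀) := by
    conv_lhs => rw [← hπ]
    exact deph_linear r σ π₀
  rw [this]
  exact deph_psd hpsd

lemma conj_kron (θ : ℝ) (c : ℂ) (P Q : Matrix (Fin 2) (Fin 2) ℂ) :
    Utheta θ * (c • (P ⊗ₖ Q)) * (Utheta θ)ᴴ
      = c • ((Adiag θ * P * (Adiag θ)ᴴ) ⊗ₖ (Bdiag θ * Q * (Bdiag θ)ᴴ)) := by
  rw [Utheta_local, mul_smul_comm, smul_mul_assoc]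
  congr 1
  rw [kron_conjT, Matrix.mul_kronecker_mul, Matrix.mul_kronecker_mul]

lemma deph_sep {σ : Matrix (Fin 2 × Fin 2) (Fin 2 × Fin 2) ℂ} (h : SepState σ) :
    SepState (deph σ) := by
  obtain ⟨L, p, P, Q, hp, hsum, hP, hQ, hdec⟩ := h
  set e : Fin 3 × Fin L ≃ Fin (3 * L) := finProdFinEquiv with he
  set ang : Fin 3 → ℝ := fun n => 2 * Real.pi * n / 3 with hang
  refine ⟨3 * L, fun j => p (e.symm j).2 / 3,
    fun j => Adiag (ang (e.symm j).1) * P ((e.symm j).2) * (Adiag (ang (e.symm j).1))ᴴ,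
    fun j => Bdiag (ang (e.symm j).1) * Q ((e.symm j).2) * (Bdiag (ang (e.symm j).1))ᴴ,
    fun j => div_nonneg (hp _) (by norm_num), ?_, ?_, ?_, ?_⟩
  · rw [Fintype.sum_equiv e.symm _ (fun x : Fin 3 × Fin L => p x.2 / 3) (fun j => rfl)]
    rw [Fintype.sum_prod_type]
    simp only [← Finset.sum_div, hsum]
    simp [Finset.sum_const]
  · exact fun j => conj_density (Adiag_unitary _) (hP _)
  · exact fun j => conj_density (Bdiag_unitary _) (hQ _)
  · rw [Fintype.sum_equiv e.symm _
      (fun x : Fin 3 × Fin L => ((p x.2 / 3 : ℝ) : ℂ) •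
        ((Adiag (ang x.1) * P x.2 * (Adiag (ang x.1))ᴴ) ⊗ₖ
          (Bdiag (ang x.1) * Q x.2 * (Bdiag (ang x.1))ᴴ))) (fun j => rfl)]
    rw [Fintype.sum_prod_type, deph_eq_discrete, hdec]
    rw [Finset.smul_sum]
    apply Finset.sum_congr rfl
    intro n _
    rw [Finset.mul_sum, Finset.sum_mul, Finset.smul_sum]
    apply Finset.sum_congr rfl
    intro i _
    rw [Vn, conj_kron, smul_smul]
    congr 1
    push_cast
    ring

lemma deph_ptraceB {σ : Matrix (Fin 2 × Fin 2) (Fin 2 × Fin 2) ℂ}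
    (h : ptraceB σ = ((2:ℂ))⁻¹ • 1) : ptraceB (deph σ) = ((2:ℂ))⁻¹ • 1 := by
  ext i j
  show ∑ b, deph σ (i, b) (j, b) = (((2:ℂ))⁻¹ • (1 : Matrix (Fin 2) (Fin 2) ℂ)) i j
  by_cases hij : i = j
  · subst hij
    have hb : ∀ b : Fin 2, deph σ (i, b) (i, b) = σ (i, b) (i, b) := fun b => by
      simp only [deph, Matrix.of_apply]
      rw [if_pos (by unfold kdiff; ring)]
    simp only [hb]
    calc ∑ b, σ (i, b) (i, b) = ptraceB σ i i := rfl
      _ = (((2:ℂ))⁻¹ • (1 : Matrix (Fin 2) (Fin 2) ℂ)) i i := by rw [h]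
  · have hval : (i : ℕ) ≠ (j : ℕ) := fun hc => hij (Fin.ext hc)
    have hb : ∀ b : Fin 2, deph σ (i, b) (j, b) = 0 := fun b => by
      simp only [deph, Matrix.of_apply]
      rw [if_neg (by unfold kdiff; dsimp only; omega)]
    simp [hb, Matrix.one_apply_ne hij]

/-- If `π₀` is a `U_θ`-invariant two-qubit density matrix and `σs` minimizes
`D_max(π₀‖·)` over separable states (resp. over separable states with maximally mixed
`B`-marginal), then its phase average is separable (resp. also has maximally mixed
`B`-marginal) and achieves the same value of `D_max(π₀‖·)`. -/
theorem stmt1 (π₀ σs : Matrix (Fin 2 × Fin 2) (Fin 2 × Fin 2) ℂ)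
    (hπ : IsDensity π₀) (hinv : ∀ θ : ℝ, Utheta θ * π₀ * (Utheta θ)ᴴ = π₀) :
    ((IsDensity σs ∧ SepState σs ∧
        (∀ σ : Matrix (Fin 2 × Fin 2) (Fin 2 × Fin 2) ℂ,
          IsDensity σ → SepState σ → Dmax π₀ σs ≤ Dmax π₀ σ)) →
      (IsDensity (avgState σs) ∧ SepState (avgState σs) ∧
        Dmax π₀ (avgState σs) = Dmax π₀ σs)) ∧
    ((IsDensity σs ∧ SepState σs ∧ ptraceB σs = ((2:ℂ))⁻¹ • 1 ∧
        (∀ σ : Matrix (Fin 2 × Fin 2) (Fin 2 × Fin 2) ℂ,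
          IsDensity σ → SepState σ → ptraceB σ = ((2:ℂ))⁻¹ • 1 →
            Dmax π₀ σs ≤ Dmax π₀ σ)) →
      (IsDensity (avgState σs) ∧ SepState (avgState σs) ∧
        ptraceB (avgState σs) = ((2:ℂ))⁻¹ • 1 ∧
        Dmax π₀ (avgState σs) = Dmax π₀ σs)) := by
  have hπd : deph π₀ = π₀ := deph_invariant π₀ hinv
  constructor
  · rintro ⟨hden, hsep, hmin⟩
    have hd : IsDensity (avgState σs) := by
      rw [avg_eq_deph]
      exact ⟨deph_psd hden.1, by rw [deph_trace, hden.2]⟩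
    have hs : SepState (avgState σs) := by rw [avg_eq_deph]; exact deph_sep hsep
    refine ⟨hd, hs, le_antisymm ?_ (hmin _ hd hs)⟩
    rw [avg_eq_deph]
    exact dmax_deph_le π₀ σs hπd
  · rintro ⟨hden, hsep, hptr, hmin⟩
    have hd : IsDensity (avgState σs) := by
      rw [avg_eq_deph]
      exact ⟨deph_psd hden.1, by rw [deph_trace, hden.2]⟩
    have hs : SepState (avgState σs) := by rw [avg_eq_deph]; exact deph_sep hsep
    have hp : ptraceB (avgState σs) = ((2:ℂ))⁻¹ • 1 := by
      rw [avg_eq_deph]; exact deph_ptraceB hptr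
    refine ⟨hd, hs, hp, le_antisymm ?_ (hmin _ hd hs hp)⟩
    rw [avg_eq_deph]
    exact dmax_deph_le π₀ σs hπd
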